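/- Let R be an SG ring, J an SG ideal of R, M an SG left R-module, and N an SG left R/J-module, and let f_*(N) denote N regarded as an SG R-module via r·n := (r+J)·n with the same semigraduation. Then every homogeneous R-linear map h : M → f_*(N) vanishes on ⟨J·M⟩^SG, and composition with the quotient map M → f^*(M) := M/⟨J·M⟩^SG is a bijection from the set of homogeneous R/J-linear maps f^*(M) → N onto the set of homogeneous R-linear maps M → f_*(N). -/

import Mathlib

open Pointwise

namespace SG

/-- A semi-graded ring: an internal direct sum decomposition `R = ⊕ₙ Rₙ` into additive
subgroups with `Rₘ·Rₙ ⊆ ⊕_{k ≤ m+n} R_k` and `1 ∈ R₀`. -/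
def IsSGRing {R : Type*} [Ring R] (g : ℤ → AddSubgroup R) : Prop :=
  DirectSum.IsInternal g ∧
    (∀ m n : ℤ, ∀ a ∈ g m, ∀ b ∈ g n, a * b ∈ ⨆ k ≤ m + n, g k) ∧
    (1 : R) ∈ g 0

/-- A semi-graded module over a semi-graded ring. -/
def IsSGModule {R M : Type*} [Ring R] [AddCommGroup M] [Module R M]
    (gR : ℤ → AddSubgroup R) (gM : ℤ → AddSubgroup M) : Prop :=
  DirectSum.IsInternal gM ∧
    ∀ m n : ℤ, 0 ≤ m → ∀ r ∈ gR m, ∀ x ∈ gM n, r • x ∈ ⨆ k ≤ m + n, gM k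

/-- A submodule `P` is a semi-graded submodule when `P = ⊕ₙ (Mₙ ⊓ P)`. -/
def IsSGSubmodule {R M : Type*} [Ring R] [AddCommGroup M] [Module R M]
    (gM : ℤ → AddSubgroup M) (P : Submodule R M) : Prop :=
  P.toAddSubgroup = ⨆ n : ℤ, (gM n ⊓ P.toAddSubgroup)

/-- `⟨X⟩^SG`: the intersection of all semi-graded submodules containing `X`. -/
def sgSpan {R M : Type*} [Ring R] [AddCommGroup M] [Module R M]
    (gM : ℤ → AddSubgroup M) (X : Set M) : Submodule R M :=
  sInf {P : Submodule R M | IsSGSubmodule gM P ∧ X ⊆ P}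

/-- A (left) ideal is two-sided. -/
def IsTwoSided {R : Type*} [Ring R] (I : Ideal R) : Prop :=
  ∀ x ∈ I, ∀ r : R, x * r ∈ I

/-- `R_{≥t}`: the intersection of all two-sided semi-graded ideals containing `⊕_{k ≥ t} R_k`. -/
def geIdeal {R : Type*} [Ring R] (gR : ℤ → AddSubgroup R) (t : ℕ) : Ideal R :=
  sInf {I : Ideal R | IsSGSubmodule gR I ∧ IsTwoSided I ∧
    ∀ k : ℤ, (t : ℤ) ≤ k → gR k ≤ I.toAddSubgroup}

/-- Powers of a (two-sided) ideal, `I⁰ = R`, `I^{n+1} = I·Iⁿ`. -/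
def idealPow {R : Type*} [Ring R] (I : Ideal R) : ℕ → Ideal R
  | 0 => ⊤
  | n + 1 => Submodule.span R ((I : Set R) * (idealPow I n : Set R))

/-- `x` is a torsion element: `(R_{≥t})ⁿ • x = 0` for some `n, t ∈ ℕ`. -/
def IsTorsionElem {R : Type*} [Ring R] (gR : ℤ → AddSubgroup R)
    {M : Type*} [AddCommGroup M] [Module R M] (x : M) : Prop :=
  ∃ t n : ℕ, ∀ y ∈ idealPow (geIdeal gR t) n, y • x = 0

/-- `R'_n`. -/
def RprimeN {R : Type*} [Ring R] (gR : ℤ → AddSubgroup R) (n : ℤ) : Set R :=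
  {r : R | r ∈ gR n ∧ ∀ m : ℤ, ∀ h ∈ gR m, r * h ∈ gR (n + m)}

/-- `R' = ⋃ₙ R'_n`. -/
def Rprime {R : Type*} [Ring R] (gR : ℤ → AddSubgroup R) : Set R :=
  ⋃ n : ℤ, RprimeN gR n

/-- `R''_n`. -/
def RdprimeN {R : Type*} [Ring R] (gR : ℤ → AddSubgroup R) (n : ℤ) : Set R :=
  {r : R | r ∈ RprimeN gR n ∧ ∀ m : ℤ, ∀ h ∈ gR m, h * r ∈ gR (n + m)}

/-- `R'' = ⋃ₙ R''_n`. -/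
def Rdprime {R : Type*} [Ring R] (gR : ℤ → AddSubgroup R) : Set R :=
  ⋃ n : ℤ, RdprimeN gR n

/-- A multiplicatively closed set satisfying the left Ore condition. -/
def IsLeftOreSet {R : Type*} [Ring R] (T : Set R) : Prop :=
  (1 : R) ∈ T ∧ (∀ a ∈ T, ∀ b ∈ T, a * b ∈ T) ∧
    ∀ r : R, ∀ s ∈ T, ∃ r' : R, ∃ s' ∈ T, s' * r = r' * s

/-- A good left Ore set. -/
def IsGoodOre {R : Type*} [Ring R] (gR : ℤ → AddSubgroup R) (T : Set R) : Prop :=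
  IsLeftOreSet T ∧ T ⊆ Rdprime gR ∧
    ∀ s ∈ T, ∀ r ∈ Rprime gR, ∃ u ∈ Rprime gR, ∃ v ∈ T, u * s = v * r

/-- A (left) schematic semi-graded ring: positively semi-graded, left Noetherian, with a
finite family of non-trivial good left Ore sets satisfying the schematic condition. -/
def IsSchematic {R : Type*} [Ring R] (gR : ℤ → AddSubgroup R) : Prop :=
  IsSGRing gR ∧ (∀ n : ℤ, n < 0 → gR n = ⊥) ∧ IsNoetherian R R ∧
    ∃ 𝒮 : Set (Set R), 𝒮.Finite ∧
      (∀ T ∈ 𝒮, IsGoodOre gR T ∧ ∃ x ∈ T, x ∈ ⨆ k ≥ (1 : ℤ), gR k) ∧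
      ∀ xf : Set R → R, (∀ T ∈ 𝒮, xf T ∈ T) →
        ∃ t m : ℕ, (idealPow (geIdeal gR t) m : Set R) ⊆
          ↑(⨆ T ∈ 𝒮, Ideal.span {xf T})

/-- `f^!(M)`: the largest semi-graded submodule of `M` annihilated by `J`, realized as the
sum of all semi-graded submodules annihilated by `J`. -/
def fShriek {R M : Type*} [Ring R] [AddCommGroup M] [Module R M]
    (gM : ℤ → AddSubgroup M) (J : Ideal R) : Submodule R M :=
  sSup {P : Submodule R M | IsSGSubmodule gM P ∧ ∀ j ∈ J, ∀ x ∈ P, j • x = 0}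

/-- The induced semigraduation on a quotient module. -/
def quotGrade {R M : Type*} [Ring R] [AddCommGroup M] [Module R M]
    (gM : ℤ → AddSubgroup M) (K : Submodule R M) : ℤ → AddSubgroup (M ⧸ K) :=
  fun n => (gM n).map (K.mkQ : M →ₗ[R] M ⧸ K).toAddMonoidHom

/-- Condition (*) on an ideal `J`. -/
def CondStar {R : Type*} [Ring R] (gR : ℤ → AddSubgroup R) (J : Ideal R) : Prop :=
  ∀ n t : ℕ, ∀ x ∈ J ⊓ idealPow (geIdeal gR t) n,
    ∃ nx tx : ℕ, ∀ y ∈ idealPow (geIdeal gR tx) nx,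
      y * x ∈ Submodule.span R ((J : Set R) * (idealPow (geIdeal gR t) n : Set R))

/-- Localizable semi-graded module: `R'_n · M_m ⊆ M_{n+m}`. -/
def IsLSG {R M : Type*} [Ring R] [AddCommGroup M] [Module R M]
    (gR : ℤ → AddSubgroup R) (gM : ℤ → AddSubgroup M) : Prop :=
  IsSGModule gR gM ∧
    ∀ n m : ℤ, ∀ r ∈ RprimeN gR n, ∀ x ∈ gM m, r • x ∈ gM (n + m)

universe v

/-- `E` is T-injective (in the category of all modules): maps into `E` from a submodule with
torsion quotient extend. -/
def TInjective {R : Type*} [Ring R] (gR : ℤ → AddSubgroup R)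
    (E : Type*) [AddCommGroup E] [Module R E] : Prop :=
  ∀ (M : Type v) [AddCommGroup M] [Module R M] (P : Submodule R M),
    (∀ x : M ⧸ P, IsTorsionElem gR x) →
      ∀ f : P →ₗ[R] E, ∃ g : M →ₗ[R] E, ∀ x : P, g (x : M) = f x

/-- `E` is T-injective within the category of LSG modules and homogeneous maps. -/
def TInjectiveLSG {R : Type*} [Ring R] (gR : ℤ → AddSubgroup R)
    {E : Type*} [AddCommGroup E] [Module R E] (gE : ℤ → AddSubgroup E) : Prop :=
  ∀ (M : Type v) [AddCommGroup M] [Module R M] (gM : ℤ → AddSubgroup M),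
    IsLSG gR gM →
    ∀ P : Submodule R M, IsSGSubmodule gM P →
      (∀ x : M ⧸ P, IsTorsionElem gR x) →
      ∀ f : P →ₗ[R] E, (∀ n : ℤ, ∀ x : P, (x : M) ∈ gM n → f x ∈ gE n) →
        ∃ g : M →ₗ[R] E, (∀ x : P, g (x : M) = f x) ∧
          ∀ n : ℤ, ∀ x ∈ gM n, g x ∈ gE n

end SG

section Aux

variable {M N : Type*} [AddCommGroup M] [AddCommGroup N]

set_option synthInstance.maxHeartbeats 1000000 in
/-- If `h` is additive, homogeneous, and kills `z`, then `z` lies in the supremum of the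
`gM n ⊓ P` where `P` is the kernel (given as an `AddSubgroup` with the right carrier). -/
lemma sg_ker_mem (gM : ℤ → AddSubgroup M) (gN : ℤ → AddSubgroup N)
    (hMi : DirectSum.IsInternal gM) (hNi : DirectSum.IsInternal gN)
    (h : M →+ N) (hhom : ∀ n : ℤ, ∀ x ∈ gM n, h x ∈ gN n)
    (P : AddSubgroup M) (hP : ∀ m : M, m ∈ P ↔ h m = 0)
    {z : M} (hz : h z = 0) : z ∈ ⨆ n : ℤ, (gM n ⊓ P) := by
  classical
  obtain ⟨a, rfl⟩ := hMi.2 z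
  have hfz : ∀ n : ℤ, (fun x : gM n => (⟨h x, hhom n x x.2⟩ : gN n)) 0 = 0 := by
    intro n; ext; simp
  set b : DirectSum ℤ (fun n => gN n) :=
    DFinsupp.mapRange (fun n (x : gM n) => (⟨h x, hhom n x x.2⟩ : gN n)) hfz a with hb
  have hsum : DirectSum.coeAddMonoidHom gN b = h (DirectSum.coeAddMonoidHom gM a) := by
    rw [DirectSum.coeAddMonoidHom_eq_dfinsuppSum, DirectSum.coeAddMonoidHom_eq_dfinsuppSum,
      hb, DFinsupp.sum_mapRange_index (by intro n; simp), map_dfinsuppSum]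
  have hb0 : b = 0 := by
    apply hNi.1
    rw [(DirectSum.coeAddMonoidHom gN).map_zero, hsum, hz]
  have hcomp : ∀ n : ℤ, h ((a n : M)) = 0 := by
    intro n
    have : b n = 0 := by rw [hb0]; rfl
    rw [hb, DFinsupp.mapRange_apply] at this
    exact congrArg Subtype.val this
  rw [DirectSum.coeAddMonoidHom_eq_dfinsuppSum]
  refine dfinsuppSum_mem _ a _ (fun n _ => ?_)
  exact le_iSup (fun n => gM n ⊓ P) n ⟨(a n).2, (hP _).2 (hcomp n)⟩

end Aux

/-- the adjunction `(f^*, f_*)`.  Here `R/J` is modelled by a surjective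
homogeneous ring homomorphism `π : R → S` with kernel `J`; `M` is an SG `R`-module,
`N` is an SG `S`-module (so `f_*(N)` is `N` with `r • n := π r • n`), and
`f^*(M) = M / ⟨J·M⟩^SG`. -/
theorem stmt_2 {R S M N : Type*} [Ring R] [Ring S]
    [AddCommGroup M] [Module R M] [AddCommGroup N] [Module S N]
    (gR : ℤ → AddSubgroup R) (gS : ℤ → AddSubgroup S)
    (gM : ℤ → AddSubgroup M) (gN : ℤ → AddSubgroup N)
    (hR : SG.IsSGRing gR) (π : R →+* S) (hπ : Function.Surjective π)
    (hgS : ∀ n : ℤ, gS n = (gR n).map π.toAddMonoidHom)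
    (J : Ideal R) (hJ : J = RingHom.ker π) (hJsg : SG.IsSGSubmodule gR J)
    (hM : SG.IsSGModule gR gM) (hN : SG.IsSGModule gS gN) :
    (∀ h : M →+ N, (∀ (r : R) (m : M), h (r • m) = π r • h m) →
        (∀ n : ℤ, ∀ x ∈ gM n, h x ∈ gN n) →
        ∀ m ∈ SG.sgSpan (R := R) gM ((J : Set R) • (Set.univ : Set M)), h m = 0) ∧
    Set.BijOn
      (fun g : (M ⧸ SG.sgSpan (R := R) gM ((J : Set R) • (Set.univ : Set M))) →+ N =>
        g.comp (SG.sgSpan (R := R) gM ((J : Set R) • (Set.univ : Set M))).mkQ.toAddMonoidHom)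
      {g : (M ⧸ SG.sgSpan (R := R) gM ((J : Set R) • (Set.univ : Set M))) →+ N |
        (∀ (r : R) (x : M ⧸ SG.sgSpan (R := R) gM ((J : Set R) • (Set.univ : Set M))),
          g (r • x) = π r • g x) ∧
        ∀ n : ℤ, ∀ x ∈ SG.quotGrade (R := R) gM (SG.sgSpan (R := R) gM ((J : Set R) • (Set.univ : Set M))) n,
          g x ∈ gN n}
      {h : M →+ N |
        (∀ (r : R) (m : M), h (r • m) = π r • h m) ∧
        ∀ n : ℤ, ∀ x ∈ gM n, h x ∈ gN n} := by
  haveI : RingHomSurjective π := ⟨hπ⟩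
  set K := SG.sgSpan (R := R) gM ((J : Set R) • (Set.univ : Set M)) with hK
  have key : ∀ h : M →+ N, (∀ (r : R) (m : M), h (r • m) = π r • h m) →
      (∀ n : ℤ, ∀ x ∈ gM n, h x ∈ gN n) → ∀ m ∈ K, h m = 0 := by
    intro h hsemi hhom m hm
    let fsl : M →ₛₗ[π] N := { toFun := h, map_add' := h.map_add, map_smul' := hsemi }
    have hker : K ≤ LinearMap.ker fsl := by
      apply sInf_le
      constructor
      · apply le_antisymm
        · intro z hz
          exact sg_ker_mem gM gN hM.1 hN.1 h hhom (LinearMap.ker fsl).toAddSubgroup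
            (fun m => Iff.rfl) hz
        · exact iSup_le fun n => inf_le_right
      · intro x hx
        obtain ⟨j, hj, m', _, rfl⟩ := Set.mem_smul.mp hx
        show h (j • m') = 0
        have hj0 : π j = 0 := by
          rw [hJ] at hj; exact hj
        rw [hsemi, hj0, zero_smul]
    exact hker hm
  refine ⟨key, ?_, ?_, ?_⟩
  · rintro g ⟨hg1, hg2⟩
    refine ⟨fun r m => ?_, fun n x hx => ?_⟩
    · show g (K.mkQ (r • m)) = π r • g (K.mkQ m)
      rw [map_smul, hg1]
    · exact hg2 n (K.mkQ x) ⟨x, hx, rfl⟩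
  · intro g1 _ g2 _ heq
    ext x
    obtain ⟨m, rfl⟩ := K.mkQ_surjective x
    exact DFunLike.congr_fun heq m
  · rintro h ⟨hsemi, hhom⟩
    let fsl : M →ₛₗ[π] N := { toFun := h, map_add' := h.map_add, map_smul' := hsemi }
    have hker : K ≤ LinearMap.ker fsl := fun m hm => key h hsemi hhom m hm
    refine ⟨(K.liftQ fsl hker).toAddMonoidHom, ⟨fun r x => ?_, fun n x hx => ?_⟩, ?_⟩
    · exact (K.liftQ fsl hker).map_smulₛₗ r x
    · obtain ⟨y, hy, rfl⟩ := hx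
      exact hhom n y hy
    · ext m
      rfl
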